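/- Evaluation of I↑↑_max on classical–quantum states: Let A be a finite index type, X a finite nonempty type, p a strictly positive probability vector on X, and for each x ∈ X let ρ_x be a density matrix on A. Set ρ_{AX} := Σ_x p(x) · ρ_x ⊗ E_xx, ρ_A := Σ_x p(x) · ρ_x, and ρ_X := Σ_x p(x) · E_xx. Then D_max( ρ_{AX} ‖ ρ_A ⊗ ρ_X ) = max over x ∈ X of D_max( ρ_x ‖ ρ_A ), and both sides are finite real numbers. -/

import Mathlib

open Matrix
open scoped ComplexOrder Kronecker

/-- The max-relative entropy `D_max(P‖Q)`. -/
noncomputable def Dmax {n : Type*} [Fintype n] (P Q : Matrix n n ℂ) : EReal :=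
  sInf {x : EReal | ∃ lam : ℝ, x = (lam : EReal) ∧ (Real.exp lam • Q - P).PosSemidef}

/-- A density matrix: positive semidefinite with trace 1. -/
def IsDensity {n : Type*} [Fintype n] (ρ : Matrix n n ℂ) : Prop :=
  ρ.PosSemidef ∧ ρ.trace = 1

section IupupAux
set_option linter.unusedSectionVars false

variable {A : Type*} [Fintype A] {X : Type*} [Fintype X] [DecidableEq X]

lemma sum_kron_eq_blockDiagonal (M : X → Matrix A A ℂ) :
    ∑ x, M x ⊗ₖ Matrix.single x x (1:ℂ) = Matrix.blockDiagonal M := by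
  ext ⟨a, x⟩ ⟨b, y⟩
  simp only [Matrix.sum_apply, Matrix.kroneckerMap_apply, Matrix.blockDiagonal_apply,
    Matrix.single, Matrix.of_apply, mul_ite, mul_one, mul_zero]
  rcases eq_or_ne x y with rfl | h
  · rw [if_pos rfl, Finset.sum_eq_single_of_mem x (Finset.mem_univ x)]
    · exact if_pos ⟨rfl, rfl⟩
    · intro z _ hz; exact if_neg fun hc => hz hc.1
  · rw [if_neg h]
    refine Finset.sum_eq_zero fun z _ => ?_
    rw [if_neg]
    rintro ⟨rfl, rfl⟩; exact h rfl

lemma psd_sum {ι : Type*} (s : Finset ι) (f : ι → Matrix A A ℂ)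
    (h : ∀ i ∈ s, (f i).PosSemidef) : (∑ i ∈ s, f i).PosSemidef :=
  Finset.sum_induction f _ (fun _ _ ha hb => ha.add hb) Matrix.PosSemidef.zero h

lemma psd_smul {M : Matrix A A ℂ} (h : M.PosSemidef) {c : ℝ} (hc : 0 ≤ c) :
    (c • M).PosSemidef := by
  have hcM : c • M = (c : ℂ) • M := by ext i j; simp [Complex.real_smul]
  rw [hcM]
  refine posSemidef_iff_dotProduct_mulVec.mpr ⟨?_, fun v => ?_⟩
  · unfold Matrix.IsHermitian
    rw [Matrix.conjTranspose_smul, h.1]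
    congr 1
    simp
  · rw [Matrix.smul_mulVec, dotProduct_smul, smul_eq_mul]
    exact mul_nonneg (by exact_mod_cast hc) (h.dotProduct_mulVec_nonneg v)

lemma psd_smul_iff {M : Matrix A A ℂ} {c : ℝ} (hc : 0 < c) :
    (c • M).PosSemidef ↔ M.PosSemidef := by
  refine ⟨fun h => ?_, fun h => psd_smul h hc.le⟩
  have := psd_smul h (inv_nonneg.mpr hc.le)
  rwa [smul_smul, inv_mul_cancel₀ hc.ne', one_smul] at this

lemma psd_diag_nonneg [DecidableEq A] {M : Matrix A A ℂ} (h : M.PosSemidef) (a : A) : 0 ≤ M a a := by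
  simpa [dotProduct, mulVec, Pi.single_apply] using h.dotProduct_mulVec_nonneg (Pi.single a 1)

lemma psd_trace_nonneg {M : Matrix A A ℂ} (h : M.PosSemidef) : 0 ≤ M.trace := by
  classical
  exact Finset.sum_nonneg fun a _ => psd_diag_nonneg h a

lemma blockDiagonal_posSemidef_iff (M : X → Matrix A A ℂ) :
    (Matrix.blockDiagonal M).PosSemidef ↔ ∀ x, (M x).PosSemidef := by
  constructor
  · intro h x
    have heq : (Matrix.blockDiagonal M).submatrix (fun a : A => (a, x)) (fun a : A => (a, x))
        = M x := by
      ext a b; simp [Matrix.blockDiagonal_apply]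
    rw [← heq]
    exact h.submatrix _
  · intro h
    refine posSemidef_iff_dotProduct_mulVec.mpr ⟨?_, fun v => ?_⟩
    · have hM : (fun x => (M x)ᴴ) = M := funext fun x => (h x).1
      unfold Matrix.IsHermitian
      rw [Matrix.blockDiagonal_conjTranspose, hM]
    · have key : star v ⬝ᵥ (Matrix.blockDiagonal M) *ᵥ v
          = ∑ x, star (fun a => v (a, x)) ⬝ᵥ (M x) *ᵥ (fun a => v (a, x)) := by
        simp only [dotProduct, mulVec, Pi.star_apply, Matrix.blockDiagonal_apply,
          Fintype.sum_prod_type, ite_mul, zero_mul, Finset.sum_ite_eq, Finset.mem_univ, if_true]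
        rw [Finset.sum_comm]
      rw [key]
      exact Finset.sum_nonneg fun x _ => (h x).dotProduct_mulVec_nonneg _

lemma kronecker_sum_right {B : Type*} [Fintype B] [DecidableEq B] {ι : Type*}
    (s : Finset ι) (N : Matrix A A ℂ) (f : ι → Matrix B B ℂ) :
    N ⊗ₖ (∑ i ∈ s, f i) = ∑ i ∈ s, N ⊗ₖ f i := by
  classical
  induction s using Finset.induction_on with
  | empty => ext ⟨a, x⟩ ⟨b, y⟩; simp [Matrix.kroneckerMap_apply]
  | insert _ _ hx ih =>
    rw [Finset.sum_insert hx, Finset.sum_insert hx, Matrix.kronecker_add, ih]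

lemma key_identity (p : X → ℝ) (ρ : X → Matrix A A ℂ) (lam : ℝ) :
    Real.exp lam • ((∑ x, p x • ρ x) ⊗ₖ ∑ x, p x • Matrix.single x x (1:ℂ))
      - ∑ x, p x • (ρ x ⊗ₖ Matrix.single x x (1:ℂ))
    = Matrix.blockDiagonal fun x => p x • (Real.exp lam • (∑ y, p y • ρ y) - ρ x) := by
  have h1 : ∑ x, p x • (ρ x ⊗ₖ Matrix.single x x (1:ℂ))
      = Matrix.blockDiagonal fun x => p x • ρ x := by
    rw [← sum_kron_eq_blockDiagonal]
    exact Finset.sum_congr rfl fun x _ => (Matrix.smul_kronecker (p x) (ρ x) _).symm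
  have h2 : (∑ x, p x • ρ x) ⊗ₖ ∑ x, p x • Matrix.single x x (1:ℂ)
      = Matrix.blockDiagonal fun x => p x • ∑ y, p y • ρ y := by
    rw [kronecker_sum_right, ← sum_kron_eq_blockDiagonal]
    refine Finset.sum_congr rfl fun x _ => ?_
    rw [Matrix.kronecker_smul, Matrix.smul_kronecker]
  have h3 : (Real.exp lam • fun x => p x • ∑ y, p y • ρ y) - (fun x => p x • ρ x)
      = fun x => p x • (Real.exp lam • ∑ y, p y • ρ y - ρ x) := by
    funext x
    simp only [Pi.sub_apply, Pi.smul_apply]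
    rw [smul_sub, smul_comm]
  rw [h1, h2, ← Matrix.blockDiagonal_smul, ← Matrix.blockDiagonal_sub, h3]

lemma sInf_coe_eq {S : Set ℝ} {m : ℝ} (hlb : ∀ s ∈ S, m ≤ s) (hmem : ∀ c, m < c → c ∈ S) :
    sInf {x : EReal | ∃ lam : ℝ, x = (lam : EReal) ∧ lam ∈ S} = (m : EReal) := by
  refine le_antisymm ?_ (le_sInf ?_)
  · refine le_of_forall_gt_imp_ge_of_dense fun c hc => ?_
    induction c using EReal.rec with
    | bot => exact absurd hc (by simp)
    | coe c => exact sInf_le ⟨c, rfl, hmem c (by exact_mod_cast hc)⟩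
    | top => exact le_top
  · rintro x ⟨lam, rfl, hl⟩
    exact_mod_cast hlb lam hl

end IupupAux

/-- Evaluation of `I↑↑_max` on classical–quantum states:
`D_max(ρ_AX ‖ ρ_A ⊗ ρ_X) = max_x D_max(ρ_x ‖ ρ_A)`, both sides finite. -/
theorem iupupmax_cq_eval
    {A : Type*} [Fintype A] {X : Type*} [Fintype X] [DecidableEq X] [Nonempty X]
    (p : X → ℝ) (hp : ∀ x, 0 < p x) (hpsum : ∑ x, p x = 1)
    (ρ : X → Matrix A A ℂ) (hρ : ∀ x, IsDensity (ρ x)) :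
    let ρAX : Matrix (A × X) (A × X) ℂ :=
      ∑ x, p x • (ρ x ⊗ₖ Matrix.single x x (1 : ℂ))
    let ρA : Matrix A A ℂ := ∑ x, p x • ρ x
    let ρX : Matrix X X ℂ := ∑ x, p x • Matrix.single x x (1 : ℂ)
    Dmax ρAX (ρA ⊗ₖ ρX) = (⨆ x, Dmax (ρ x) ρA) ∧
      Dmax ρAX (ρA ⊗ₖ ρX) ≠ ⊤ ∧ Dmax ρAX (ρA ⊗ₖ ρX) ≠ ⊥ ∧
      (⨆ x, Dmax (ρ x) ρA) ≠ ⊤ ∧ (⨆ x, Dmax (ρ x) ρA) ≠ ⊥ := by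
  intro ρAX ρA ρX
  classical
  set S : X → Set ℝ :=
    fun x => {lam : ℝ | (Real.exp lam • (∑ y, p y • ρ y) - ρ x).PosSemidef} with hSdef
  have hρA : (∑ y, p y • ρ y).PosSemidef :=
    psd_sum _ _ fun y _ => psd_smul (hρ y).1 (hp y).le
  have htrA : (∑ y, p y • ρ y).trace = 1 := by
    calc (∑ y, p y • ρ y).trace = ∑ y, ((p y : ℝ) : ℂ) := by
          rw [Matrix.trace_sum]
          exact Finset.sum_congr rfl fun y _ => by
            rw [Matrix.trace_smul, (hρ y).2, Complex.real_smul, mul_one]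
      _ = 1 := by exact_mod_cast hpsum
  have hup : ∀ x, ∀ lam ∈ S x, ∀ mu, lam ≤ mu → mu ∈ S x := by
    intro x lam hlam mu hmu
    have key : Real.exp mu • (∑ y, p y • ρ y) - ρ x
        = (Real.exp lam • (∑ y, p y • ρ y) - ρ x)
          + (Real.exp mu - Real.exp lam) • (∑ y, p y • ρ y) := by
      rw [sub_smul]; abel
    show (Real.exp mu • (∑ y, p y • ρ y) - ρ x).PosSemidef
    rw [key]
    exact Matrix.PosSemidef.add hlam
      (psd_smul hρA (sub_nonneg.mpr (Real.exp_le_exp.mpr hmu)))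
  have hne : ∀ x, -Real.log (p x) ∈ S x := by
    intro x
    show (Real.exp (-Real.log (p x)) • (∑ y, p y • ρ y) - ρ x).PosSemidef
    rw [Real.exp_neg, Real.exp_log (hp x)]
    have h1 : (p x)⁻¹ • (∑ y, p y • ρ y) - ρ x
        = (p x)⁻¹ • ((∑ y, p y • ρ y) - p x • ρ x) := by
      rw [smul_sub, smul_smul, inv_mul_cancel₀ (hp x).ne', one_smul]
    rw [h1]
    refine psd_smul ?_ (inv_nonneg.mpr (hp x).le)
    have h2 : (∑ y, p y • ρ y) - p x • ρ x = ∑ y ∈ Finset.univ.erase x, p y • ρ y := by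
      rw [← Finset.sum_erase_add Finset.univ _ (Finset.mem_univ x), add_sub_cancel_right]
    rw [h2]
    exact psd_sum _ _ fun y _ => psd_smul (hρ y).1 (hp y).le
  have hbd : ∀ x, ∀ lam ∈ S x, (0:ℝ) ≤ lam := by
    intro x lam hlam
    have h0 : (0:ℂ) ≤ (Real.exp lam • (∑ y, p y • ρ y) - ρ x).trace := psd_trace_nonneg hlam
    rw [Matrix.trace_sub, Matrix.trace_smul, htrA, (hρ x).2] at h0
    have h1 : ((Real.exp lam - 1 : ℝ) : ℂ) = Real.exp lam • (1:ℂ) - 1 := by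
      push_cast [Complex.real_smul]; ring
    rw [← h1] at h0
    have h2 : (0:ℝ) ≤ Real.exp lam - 1 := by exact_mod_cast h0
    have h3 : Real.exp 0 ≤ Real.exp lam := by rw [Real.exp_zero]; linarith
    exact Real.exp_le_exp.mp h3
  set a : X → ℝ := fun x => sInf (S x) with hadef
  have hSne : ∀ x, (S x).Nonempty := fun x => ⟨_, hne x⟩
  have hSbd : ∀ x, BddBelow (S x) := fun x => ⟨0, fun s hs => hbd x s hs⟩
  have hax : ∀ x, ∀ s ∈ S x, a x ≤ s := fun x s hs => csInf_le (hSbd x) hs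
  have haxm : ∀ x, ∀ c, a x < c → c ∈ S x := by
    intro x c hc
    obtain ⟨s, hs, hsc⟩ := exists_lt_of_csInf_lt (hSne x) hc
    exact hup x s hs c hsc.le
  have hDx : ∀ x, Dmax (ρ x) ρA = ((a x : ℝ) : EReal) := fun x =>
    sInf_coe_eq (hax x) (haxm x)
  have hXne : (Finset.univ : Finset X).Nonempty := Finset.univ_nonempty
  set m : ℝ := Finset.univ.sup' hXne a with hm
  have hiff : ∀ lam : ℝ,
      (Real.exp lam • ((∑ x, p x • ρ x) ⊗ₖ ∑ x, p x • Matrix.single x x (1:ℂ))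
        - ∑ x, p x • (ρ x ⊗ₖ Matrix.single x x (1:ℂ))).PosSemidef ↔ ∀ x, lam ∈ S x := by
    intro lam
    rw [key_identity p ρ lam, blockDiagonal_posSemidef_iff]
    exact forall_congr' fun x => psd_smul_iff (hp x)
  have hD : Dmax ρAX (ρA ⊗ₖ ρX) = (m : EReal) := by
    refine sInf_coe_eq (S := {lam : ℝ |
      (Real.exp lam • (ρA ⊗ₖ ρX) - ρAX).PosSemidef}) ?_ ?_
    · intro s hs
      exact Finset.sup'_le hXne a fun x _ => hax x s ((hiff s).mp hs x)
    · intro c hc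
      exact (hiff c).mpr fun x =>
        haxm x c (lt_of_le_of_lt (Finset.le_sup' a (Finset.mem_univ x)) hc)
  have hsup : (⨆ x, Dmax (ρ x) ρA) = (m : EReal) := by
    rw [show (⨆ x, Dmax (ρ x) ρA) = ⨆ x, ((a x : ℝ) : EReal) from iSup_congr hDx]
    apply le_antisymm
    · exact iSup_le fun x => EReal.coe_le_coe_iff.mpr (Finset.le_sup' a (Finset.mem_univ x))
    · obtain ⟨x0, -, hx0⟩ := Finset.exists_mem_eq_sup' hXne a
      rw [hm, hx0]
      exact le_iSup (fun x => ((a x : ℝ) : EReal)) x0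
  exact ⟨by rw [hD, hsup], by rw [hD]; exact EReal.coe_ne_top m,
    by rw [hD]; exact EReal.coe_ne_bot m, by rw [hsup]; exact EReal.coe_ne_top m,
    by rw [hsup]; exact EReal.coe_ne_bot m⟩
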